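/- Write ℳ⁺ := ℳ = 1⊗1 + Kθ̄⊗θ + θK⊗θ̄ − ρ⊗ρ and ℳ⁻ := ℳ⁻¹ = 1⊗1 − Kθ̄⊗θ − θK⊗θ̄ − ρ⊗ρ, with expansions ℳ^± = Σ_j m_j^±⊗n_j^±, and define the linear maps s^±: 𝒩 → 𝒩 by s^±(x) := Σ_j μ₀(S(x)·m_j^±)·n_j^±. Then s^±(θ) = ∓θ, s^±(θ̄) = ∓θ̄, s^±(ρ) = 1, s^±(1) = −ρ, and s^±(K·x) = 0 for every x ∈ Λ*E. -/
import Mathlib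

noncomputable section

open TensorProduct

/-- The quadratic form `q(x₀,x₁,x₂) = x₀²` on `ℝ³`. -/
def Nform : QuadraticForm ℝ (Fin 3 → ℝ) :=
  QuadraticMap.weightedSumSquares ℝ (fun i : Fin 3 => if i = 0 then (1 : ℝ) else 0)

/-- The algebra `𝒩 = ℤ/2 ⋉ Λ*ℝ²`, realized as the Clifford algebra of `Nform`. -/
abbrev NA := CliffordAlgebra Nform

/-- The generator `K`. -/
def K : NA := CliffordAlgebra.ι Nform (Pi.single 0 1)

/-- The generator `θ`. -/
def θ : NA := CliffordAlgebra.ι Nform (Pi.single 1 1)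

/-- The generator `θ̄`. -/
def θb : NA := CliffordAlgebra.ι Nform (Pi.single 2 1)

/-- `ρ := θ̄θ`. -/
def ρ : NA := θb * θ

/-- `ℳ⁺ := ℳ = 1⊗1 + Kθ̄⊗θ + θK⊗θ̄ − ρ⊗ρ`. -/
def MonoP : NA ⊗[ℝ] NA := 1 + (K * θb) ⊗ₜ[ℝ] θ + (θ * K) ⊗ₜ[ℝ] θb - ρ ⊗ₜ[ℝ] ρ

/-- `ℳ⁻ := ℳ⁻¹ = 1⊗1 − Kθ̄⊗θ − θK⊗θ̄ − ρ⊗ρ`. -/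
def MonoM : NA ⊗[ℝ] NA := 1 - (K * θb) ⊗ₜ[ℝ] θ - (θ * K) ⊗ₜ[ℝ] θb - ρ ⊗ₜ[ℝ] ρ

/-- `Λ*E`, the subalgebra of `𝒩` spanned by `1, θ, θ̄, ρ`. -/
def ΛE : Submodule ℝ NA := Submodule.span ℝ {1, θ, θb, ρ}

/-- Given the functional `μ₀`, the antipode `S` and an element `m = Σ_j m_j ⊗ n_j` of
`𝒩⊗𝒩`, this is the map `x ↦ Σ_j μ₀(S(x)·m_j)·n_j` (expressed basis-freely). -/
def sMap (μ₀ : NA →ₗ[ℝ] ℝ) (S : NA →ₗ[ℝ] NA) (m : NA ⊗[ℝ] NA) (x : NA) : NA :=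
  (TensorProduct.lid ℝ NA)
    (LinearMap.rTensor NA (μ₀ ∘ₗ LinearMap.mulLeft ℝ (S x)) m)

/- ### Auxiliary lemmas -/

lemma Nform_apply (v : Fin 3 → ℝ) : Nform v = v 0 * v 0 := by
  simp [Nform, QuadraticMap.weightedSumSquares_apply, Fin.sum_univ_three]

lemma sq_gen (i : Fin 3) :
    CliffordAlgebra.ι Nform (Pi.single i 1) * CliffordAlgebra.ι Nform (Pi.single i 1)
      = algebraMap ℝ NA ((Pi.single i (1:ℝ) : Fin 3 → ℝ) 0 ^ 2) := by
  rw [CliffordAlgebra.ι_sq_scalar, Nform_apply, sq]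

lemma hK2 : K * K = 1 := by
  simpa [K, Pi.single_apply] using sq_gen 0
lemma hθ2 : θ * θ = 0 := by
  simpa [θ, Pi.single_apply] using sq_gen 1
lemma hθb2 : θb * θb = 0 := by
  simpa [θb, Pi.single_apply] using sq_gen 2

lemma anticomm (i j : Fin 3) (h : i ≠ j) :
    CliffordAlgebra.ι Nform (Pi.single i 1) * CliffordAlgebra.ι Nform (Pi.single j 1)
      = -(CliffordAlgebra.ι Nform (Pi.single j 1) * CliffordAlgebra.ι Nform (Pi.single i 1)) := by
  have h2 := CliffordAlgebra.ι_mul_ι_add_swap (Q := Nform) (Pi.single i (1:ℝ)) (Pi.single j 1)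
  have hp : QuadraticMap.polar (⇑Nform) (Pi.single i (1:ℝ)) (Pi.single j 1) = 0 := by
    simp [QuadraticMap.polar, Nform_apply, Pi.single_apply, h, h.symm]
    fin_cases i <;> fin_cases j <;> simp_all
  rw [hp] at h2; simp at h2; linear_combination (norm := noncomm_ring) h2

lemma hθK : θ * K = -(K * θ) := by
  simpa [θ, K] using anticomm 1 0 (by decide)
lemma hθbK : θb * K = -(K * θb) := by
  simpa [θb, K] using anticomm 2 0 (by decide)
lemma hθθb : θ * θb = -(θb * θ) := by
  simpa [θ, θb] using anticomm 1 2 (by decide)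

-- tail versions for simp-normalization (K leftmost, then θb, then θ)
lemma hθK' (x : NA) : θ * (K * x) = -(K * (θ * x)) := by
  rw [← mul_assoc, hθK]; noncomm_ring
lemma hθbK' (x : NA) : θb * (K * x) = -(K * (θb * x)) := by
  rw [← mul_assoc, hθbK]; noncomm_ring
lemma hθθb' (x : NA) : θ * (θb * x) = -(θb * (θ * x)) := by
  rw [← mul_assoc, hθθb]; noncomm_ring
lemma hKK' (x : NA) : K * (K * x) = x := by
  rw [← mul_assoc, hK2, one_mul]
lemma hθθ' (x : NA) : θ * (θ * x) = 0 := by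
  rw [← mul_assoc, hθ2, zero_mul]
lemma hθbθb' (x : NA) : θb * (θb * x) = 0 := by
  rw [← mul_assoc, hθb2, zero_mul]

lemma sMap_tmul (μ₀ : NA →ₗ[ℝ] ℝ) (S : NA →ₗ[ℝ] NA) (a b x : NA) :
    sMap μ₀ S (a ⊗ₜ[ℝ] b) x = μ₀ (S x * a) • b := by
  simp [sMap]

set_option synthInstance.maxHeartbeats 400000 in
lemma sMap_madd (μ₀ : NA →ₗ[ℝ] ℝ) (S : NA →ₗ[ℝ] NA) (m n : NA ⊗[ℝ] NA) (x : NA) :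
    sMap μ₀ S (m + n) x = sMap μ₀ S m x + sMap μ₀ S n x := by
  unfold sMap; rw [map_add, map_add]

set_option synthInstance.maxHeartbeats 400000 in
lemma sMap_msub (μ₀ : NA →ₗ[ℝ] ℝ) (S : NA →ₗ[ℝ] NA) (m n : NA ⊗[ℝ] NA) (x : NA) :
    sMap μ₀ S (m - n) x = sMap μ₀ S m x - sMap μ₀ S n x := by
  unfold sMap; rw [map_sub, map_sub]

lemma sMapP (μ₀ : NA →ₗ[ℝ] ℝ) (S : NA →ₗ[ℝ] NA) (x : NA) :
    sMap μ₀ S MonoP x = μ₀ (S x) • (1 : NA) + μ₀ (S x * (K * θb)) • θ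
      + μ₀ (S x * (θ * K)) • θb - μ₀ (S x * ρ) • ρ := by
  rw [MonoP, Algebra.TensorProduct.one_def, sMap_msub, sMap_madd, sMap_madd,
    sMap_tmul, sMap_tmul, sMap_tmul, sMap_tmul, mul_one]

lemma sMapM (μ₀ : NA →ₗ[ℝ] ℝ) (S : NA →ₗ[ℝ] NA) (x : NA) :
    sMap μ₀ S MonoM x = μ₀ (S x) • (1 : NA) - μ₀ (S x * (K * θb)) • θ
      - μ₀ (S x * (θ * K)) • θb - μ₀ (S x * ρ) • ρ := by
  rw [MonoM, Algebra.TensorProduct.one_def, sMap_msub, sMap_msub, sMap_msub,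
    sMap_tmul, sMap_tmul, sMap_tmul, sMap_tmul, mul_one]

/-- the maps `s^±(x) := Σ_j μ₀(S(x)·m_j^±)·n_j^±` built from the
expansions `ℳ^± = Σ_j m_j^± ⊗ n_j^±` satisfy `s^±(θ) = ∓θ`, `s^±(θ̄) = ∓θ̄`,
`s^±(ρ) = 1`, `s^±(1) = −ρ`, and `s^±(K·x) = 0` for every `x ∈ Λ*E`. -/
theorem stmt11
    (S : NA →ₗ[ℝ] NA) (hS1 : S 1 = 1) (hSmul : ∀ x y : NA, S (x * y) = S y * S x)
    (hSK : S K = K) (hSθ : S θ = -(K * θ)) (hSθb : S θb = -(K * θb))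
    (μ₀ : NA →ₗ[ℝ] ℝ)
    (hμ1 : μ₀ 1 = 0) (hμθ : μ₀ θ = 0) (hμθb : μ₀ θb = 0) (hμρ : μ₀ ρ = 1)
    (hμK : μ₀ K = 0) (hμKθ : μ₀ (K * θ) = 0) (hμKθb : μ₀ (K * θb) = 0)
    (hμKρ : μ₀ (K * ρ) = 0) :
    sMap μ₀ S MonoP θ = -θ ∧ sMap μ₀ S MonoM θ = θ ∧
    sMap μ₀ S MonoP θb = -θb ∧ sMap μ₀ S MonoM θb = θb ∧
    sMap μ₀ S MonoP ρ = 1 ∧ sMap μ₀ S MonoM ρ = 1 ∧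
    sMap μ₀ S MonoP 1 = -ρ ∧ sMap μ₀ S MonoM 1 = -ρ ∧
    (∀ x ∈ ΛE, sMap μ₀ S MonoP (K * x) = 0 ∧ sMap μ₀ S MonoM (K * x) = 0) := by
  have hμρ' : μ₀ (θb * θ) = 1 := hμρ
  have hμKρ' : μ₀ (K * (θb * θ)) = 0 := by rw [← mul_assoc]; rw [show K * θb * θ = K * ρ by rw [ρ, mul_assoc]] ; exact hμKρ
  have hSρ : S ρ = ρ := by
    rw [ρ, hSmul, hSθ, hSθb, neg_mul_neg]
    simp [mul_assoc, hθK', hKK', hθθb]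
  -- values of S on K * basis elements, times things
  refine ⟨?_, ?_, ?_, ?_, ?_, ?_, ?_, ?_, ?_⟩
  · rw [sMapP]
    simp [hSmul, hSθ, hSθb, hSK, hS1, mul_assoc, hθK', hθbK', hθθb', hKK', hθθ', hθbθb', ρ,
      hμ1, hμθ, hμθb, hμρ', hμK, hμKθ, hμKθb, hμKρ', hθK, hθbK, hθθb, hK2, hθ2, hθb2]
  · rw [sMapM]
    simp [hSmul, hSθ, hSθb, hSK, hS1, mul_assoc, hθK', hθbK', hθθb', hKK', hθθ', hθbθb', ρ,
      hμ1, hμθ, hμθb, hμρ', hμK, hμKθ, hμKθb, hμKρ', hθK, hθbK, hθθb, hK2, hθ2, hθb2]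
  · rw [sMapP]
    simp [hSmul, hSθ, hSθb, hSK, hS1, mul_assoc, hθK', hθbK', hθθb', hKK', hθθ', hθbθb', ρ,
      hμ1, hμθ, hμθb, hμρ', hμK, hμKθ, hμKθb, hμKρ', hθK, hθbK, hθθb, hK2, hθ2, hθb2]
  · rw [sMapM]
    simp [hSmul, hSθ, hSθb, hSK, hS1, mul_assoc, hθK', hθbK', hθθb', hKK', hθθ', hθbθb', ρ,
      hμ1, hμθ, hμθb, hμρ', hμK, hμKθ, hμKθb, hμKρ', hθK, hθbK, hθθb, hK2, hθ2, hθb2]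
  · rw [sMapP]
    simp [hSmul, hSθ, hSθb, hSK, hS1, mul_assoc, hθK', hθbK', hθθb', hKK', hθθ', hθbθb', ρ,
      hμ1, hμθ, hμθb, hμρ', hμK, hμKθ, hμKθb, hμKρ', hθK, hθbK, hθθb, hK2, hθ2, hθb2]
  · rw [sMapM]
    simp [hSmul, hSθ, hSθb, hSK, hS1, mul_assoc, hθK', hθbK', hθθb', hKK', hθθ', hθbθb', ρ,
      hμ1, hμθ, hμθb, hμρ', hμK, hμKθ, hμKθb, hμKρ', hθK, hθbK, hθθb, hK2, hθ2, hθb2]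
  · rw [sMapP]
    simp [hSmul, hSθ, hSθb, hSK, hS1, mul_assoc, hθK', hθbK', hθθb', hKK', hθθ', hθbθb', ρ,
      hμ1, hμθ, hμθb, hμρ', hμK, hμKθ, hμKθb, hμKρ', hθK, hθbK, hθθb, hK2, hθ2, hθb2]
  · rw [sMapM]
    simp [hSmul, hSθ, hSθb, hSK, hS1, mul_assoc, hθK', hθbK', hθθb', hKK', hθθ', hθbθb', ρ,
      hμ1, hμθ, hμθb, hμρ', hμK, hμKθ, hμKθb, hμKρ', hθK, hθbK, hθθb, hK2, hθ2, hθb2]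
  · intro x hx
    induction hx using Submodule.span_induction with
    | mem y hy =>
      rcases hy with rfl | rfl | rfl | rfl
      · constructor
        · rw [sMapP]
          simp [hSmul, hSθ, hSθb, hSK, hS1, mul_assoc, hθK', hθbK', hθθb', hKK', hθθ', hθbθb', ρ,
            hμ1, hμθ, hμθb, hμρ', hμK, hμKθ, hμKθb, hμKρ', hθK, hθbK, hθθb, hK2, hθ2, hθb2]
        · rw [sMapM]
          simp [hSmul, hSθ, hSθb, hSK, hS1, mul_assoc, hθK', hθbK', hθθb', hKK', hθθ', hθbθb', ρ,
            hμ1, hμθ, hμθb, hμρ', hμK, hμKθ, hμKθb, hμKρ', hθK, hθbK, hθθb, hK2, hθ2, hθb2]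
      · constructor
        · rw [sMapP]
          simp [hSmul, hSθ, hSθb, hSK, hS1, mul_assoc, hθK', hθbK', hθθb', hKK', hθθ', hθbθb', ρ,
            hμ1, hμθ, hμθb, hμρ', hμK, hμKθ, hμKθb, hμKρ', hθK, hθbK, hθθb, hK2, hθ2, hθb2]
        · rw [sMapM]
          simp [hSmul, hSθ, hSθb, hSK, hS1, mul_assoc, hθK', hθbK', hθθb', hKK', hθθ', hθbθb', ρ,
            hμ1, hμθ, hμθb, hμρ', hμK, hμKθ, hμKθb, hμKρ', hθK, hθbK, hθθb, hK2, hθ2, hθb2]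
      · constructor
        · rw [sMapP]
          simp [hSmul, hSθ, hSθb, hSK, hS1, mul_assoc, hθK', hθbK', hθθb', hKK', hθθ', hθbθb', ρ,
            hμ1, hμθ, hμθb, hμρ', hμK, hμKθ, hμKθb, hμKρ', hθK, hθbK, hθθb, hK2, hθ2, hθb2]
        · rw [sMapM]
          simp [hSmul, hSθ, hSθb, hSK, hS1, mul_assoc, hθK', hθbK', hθθb', hKK', hθθ', hθbθb', ρ,
            hμ1, hμθ, hμθb, hμρ', hμK, hμKθ, hμKθb, hμKρ', hθK, hθbK, hθθb, hK2, hθ2, hθb2]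
      · constructor
        · rw [sMapP]
          simp [hSmul, hSθ, hSθb, hSK, hS1, mul_assoc, hθK', hθbK', hθθb', hKK', hθθ', hθbθb', ρ,
            hμ1, hμθ, hμθb, hμρ', hμK, hμKθ, hμKθb, hμKρ', hθK, hθbK, hθθb, hK2, hθ2, hθb2]
        · rw [sMapM]
          simp [hSmul, hSθ, hSθb, hSK, hS1, mul_assoc, hθK', hθbK', hθθb', hKK', hθθ', hθbθb', ρ,
            hμ1, hμθ, hμθb, hμρ', hμK, hμKθ, hμKθb, hμKρ', hθK, hθbK, hθθb, hK2, hθ2, hθb2]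
    | zero =>
      have h0 : S (K * (0:NA)) = 0 := by simp
      constructor <;>
        simp [sMapP, sMapM, h0]
    | add y z hy hz ihy ihz =>
      have ha : ∀ m : NA ⊗[ℝ] NA, sMap μ₀ S m (K * (y + z))
          = sMap μ₀ S m (K * y) + sMap μ₀ S m (K * z) := by
        intro m
        have hc : (μ₀ ∘ₗ LinearMap.mulLeft ℝ (S (K * (y + z))))
            = (μ₀ ∘ₗ LinearMap.mulLeft ℝ (S (K * y)))
              + (μ₀ ∘ₗ LinearMap.mulLeft ℝ (S (K * z))) := by
          ext w
          simp [mul_add, map_add, add_mul]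
        simp [sMap, hc, LinearMap.rTensor_add]
      exact ⟨by rw [ha, ihy.1, ihz.1, add_zero], by rw [ha, ihy.2, ihz.2, add_zero]⟩
    | smul r y hy ihy =>
      have ha : ∀ m : NA ⊗[ℝ] NA, sMap μ₀ S m (K * (r • y))
          = r • sMap μ₀ S m (K * y) := by
        intro m
        have hc : (μ₀ ∘ₗ LinearMap.mulLeft ℝ (S (K * (r • y))))
            = r • (μ₀ ∘ₗ LinearMap.mulLeft ℝ (S (K * y))) := by
          ext w
          simp [mul_smul_comm, map_smul, smul_mul_assoc]
        rw [sMap, hc, LinearMap.rTensor_smul]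
        simp [sMap]
      exact ⟨by rw [ha, ihy.1, smul_zero], by rw [ha, ihy.2, smul_zero]⟩
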